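/- Let A* ∈ ℝ^{d×d} be entrywise nonnegative and invertible, let μ be a probability measure on ℝ^d with full support, and let X_1, X_2, … be i.i.d. with law μ. Define the random sets T̂_n(ω) = {A ∈ ℝ^{d×d} : A·X_i(ω) ≤ (A*X_i(ω))⁺ entrywise for all 1 ≤ i ≤ n} and the deterministic set T* = {diag(k)·A* : k ∈ ℝ^d, 0 ≤ k_j ≤ 1 for all j}. Then almost surely the Hausdorff distance between T̂_n(ω) and T* tends to 0 as n → ∞. -/

import Mathlib

open MeasureTheory Matrix ProbabilityTheory Filter

attribute [local instance] Matrix.frobeniusNormedAddCommGroup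

/-- Entrywise rectifier (ReLU). -/
def relu {k : ℕ} (v : Fin k → ℝ) : Fin k → ℝ := fun i => max (v i) 0

attribute [local instance] Matrix.frobeniusNormedSpace

variable {d : ℕ}

def TS (Astar : Matrix (Fin d) (Fin d) ℝ) : Set (Matrix (Fin d) (Fin d) ℝ) :=
  {A | ∃ k : Fin d → ℝ, (∀ j, 0 ≤ k j ∧ k j ≤ 1) ∧ A = Matrix.diagonal k * Astar}

lemma TS_sub {Astar A : Matrix (Fin d) (Fin d) ℝ} (hA : A ∈ TS Astar) :
    ∀ x j, A.mulVec x j ≤ relu (Astar.mulVec x) j := by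
  obtain ⟨k, hk, rfl⟩ := hA
  intro x j
  rw [← Matrix.mulVec_mulVec]
  rw [Matrix.mulVec_diagonal]
  rcases le_or_gt 0 (Astar.mulVec x j) with h | h
  · calc k j * Astar.mulVec x j ≤ 1 * Astar.mulVec x j := by
          exact mul_le_mul_of_nonneg_right (hk j).2 h
      _ = Astar.mulVec x j := one_mul _
      _ ≤ relu (Astar.mulVec x) j := le_max_left _ _
  · calc k j * Astar.mulVec x j ≤ 0 := mul_nonpos_of_nonneg_of_nonpos (hk j).1 h.le
      _ ≤ relu (Astar.mulVec x) j := le_max_right _ _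

lemma mem_TS {Astar : Matrix (Fin d) (Fin d) ℝ} (hAinv : IsUnit Astar.det)
    {A : Matrix (Fin d) (Fin d) ℝ}
    (h : ∀ x j, A.mulVec x j ≤ relu (Astar.mulVec x) j) : A ∈ TS Astar := by
  set B := A * Astar⁻¹ with hB
  have hBy : ∀ y : Fin d → ℝ, ∀ j, B.mulVec y j ≤ relu y j := by
    intro y j
    have h1 : Astar.mulVec (Astar⁻¹.mulVec y) = y := by
      rw [Matrix.mulVec_mulVec, Matrix.mul_nonsing_inv _ hAinv, Matrix.one_mulVec]
    have h2 : B.mulVec y = A.mulVec (Astar⁻¹.mulVec y) := by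
      rw [Matrix.mulVec_mulVec]
    rw [h2]
    have := h (Astar⁻¹.mulVec y) j
    rwa [h1] at this
  have hBne : ∀ i j, i ≠ j → B i j = 0 := by
    intro i j hij
    have h1 := hBy (Pi.single j 1) i
    have h2 := hBy (-Pi.single j 1) i
    rw [Matrix.mulVec_single] at h1
    rw [Matrix.mulVec_neg, Matrix.mulVec_single] at h2
    simp only [mul_one, relu, Pi.neg_apply, Pi.single_apply] at h1 h2
    rw [if_neg hij] at h1 h2
    simp at h1 h2
    linarith
  have hBd : ∀ j, 0 ≤ B j j ∧ B j j ≤ 1 := by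
    intro j
    have h1 := hBy (Pi.single j 1) j
    have h2 := hBy (-Pi.single j 1) j
    rw [Matrix.mulVec_single] at h1
    rw [Matrix.mulVec_neg, Matrix.mulVec_single] at h2
    simp only [mul_one, relu, Pi.neg_apply, Pi.single_apply, if_pos rfl] at h1 h2 <;> skip
    constructor
    · simp at h2; linarith
    · simpa using h1
  refine ⟨fun j => B j j, hBd, ?_⟩
  have hBdiag : B = Matrix.diagonal (fun j => B j j) := by
    ext i j
    by_cases hij : i = j
    · subst hij; simp [Matrix.diagonal_apply_eq]
    · rw [Matrix.diagonal_apply_ne _ hij, hBne i j hij]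
  rw [← hBdiag, hB, Matrix.nonsing_inv_mul_cancel_right _ _ hAinv]

lemma TS_nonempty (Astar : Matrix (Fin d) (Fin d) ℝ) : (TS Astar).Nonempty :=
  ⟨Matrix.diagonal 0 * Astar, 0, fun _ => ⟨le_refl _, zero_le_one⟩, rfl⟩

lemma TS_compact (Astar : Matrix (Fin d) (Fin d) ℝ) : IsCompact (TS Astar) := by
  have h : TS Astar = (fun k : Fin d → ℝ => Matrix.diagonal k * Astar) ''
      (Set.univ.pi fun _ => Set.Icc (0:ℝ) 1) := by
    ext A
    simp only [TS, Set.mem_setOf_eq, Set.mem_image, Set.mem_pi, Set.mem_univ, forall_true_left,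
      Set.mem_Icc]
    constructor
    · rintro ⟨k, hk, rfl⟩; exact ⟨k, fun j => hk j, rfl⟩
    · rintro ⟨k, hk, rfl⟩; exact ⟨k, fun j => hk j, rfl⟩
  rw [h]
  refine (isCompact_univ_pi fun _ => isCompact_Icc).image ?_
  refine continuous_pi fun i => continuous_pi fun j => ?_
  have : (fun k : Fin d → ℝ => (Matrix.diagonal k * Astar) i j)
      = fun k : Fin d → ℝ => k i * Astar i j := by
    funext k; rw [Matrix.diagonal_mul]
  rw [this]
  exact (continuous_apply i).mul continuous_const

lemma Tn_eventually (hd : 1 ≤ d) (Astar : Matrix (Fin d) (Fin d) ℝ)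
    (hAinv : IsUnit Astar.det) (x : ℕ → Fin d → ℝ) (hdense : Dense (Set.range x))
    {ε : ℝ} (hε : 0 < ε) :
    ∀ᶠ n in atTop, Metric.hausdorffDist
      {A : Matrix (Fin d) (Fin d) ℝ | ∀ i < n, ∀ j,
        A.mulVec (x i) j ≤ relu (Astar.mulVec (x i)) j} (TS Astar) ≤ ε := by
  classical
  set C : ℝ := 1 + ∑ a, ∑ b, |Astar a b| with hCdef
  have hC : 0 < C := by
    have : (0:ℝ) ≤ ∑ a, ∑ b, |Astar a b| :=
      Finset.sum_nonneg fun a _ => Finset.sum_nonneg fun b _ => abs_nonneg _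
    linarith
  have hrowC : ∀ a, ∑ b, |Astar a b| ≤ C := by
    intro a
    have h1 : ∑ b, |Astar a b| ≤ ∑ a, ∑ b, |Astar a b| :=
      Finset.single_le_sum (f := fun a => ∑ b, |Astar a b|)
        (fun a _ => Finset.sum_nonneg fun b _ => abs_nonneg _) (Finset.mem_univ a)
    linarith
  have hrelu : ∀ v : Fin d → ℝ, (∀ k, |v k| ≤ 2) → ∀ a, relu (Astar.mulVec v) a ≤ 2*C := by
    intro v hv a
    have h1 : Astar.mulVec v a ≤ 2*C := by
      calc Astar.mulVec v a = ∑ k, Astar a k * v k := rfl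
        _ ≤ ∑ k, |Astar a k| * 2 := by
            refine Finset.sum_le_sum fun k _ => ?_
            calc Astar a k * v k ≤ |Astar a k * v k| := le_abs_self _
              _ = |Astar a k| * |v k| := abs_mul _ _
              _ ≤ |Astar a k| * 2 := by
                  exact mul_le_mul_of_nonneg_left (hv k) (abs_nonneg _)
        _ = (∑ k, |Astar a k|) * 2 := by rw [Finset.sum_mul]
        _ ≤ C * 2 := by nlinarith [hrowC a]
        _ = 2*C := by ring
    exact max_le h1 (by positivity)
  set δ : ℝ := 1/(2*(d:ℝ)) with hδdef
  have hdpos : (0:ℝ) < d := by exact_mod_cast hd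
  have hδpos : 0 < δ := by positivity
  have hd1 : (1:ℝ) ≤ (d:ℝ) := by exact_mod_cast hd
  have hδd : (d:ℝ) * δ = 1/2 := by rw [hδdef]; field_simp
  have hδle : δ ≤ 1/2 := by
    rw [hδdef]; rw [div_le_div_iff₀ (by positivity) (by norm_num)]; nlinarith [hd1]
  -- sample picks near points
  have hpick : ∀ c : Fin d → ℝ, ∃ i, dist (x i) c < δ := by
    intro c
    obtain ⟨v, ⟨i, rfl⟩, hv⟩ := hdense.exists_mem_open Metric.isOpen_ball
      ⟨c, Metric.mem_ball_self hδpos⟩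
    exact ⟨i, hv⟩
  choose ip hip using fun b : Fin d => hpick (Pi.single b 1)
  choose im him using fun b : Fin d => hpick (-Pi.single b 1)
  set R₀ : ℝ := 4*C*d with hR₀
  -- mulVec abs bound
  have hmv : ∀ (A : Matrix (Fin d) (Fin d) ℝ) (w : Fin d → ℝ) (a : Fin d) (r : ℝ),
      (∀ k, |w k| ≤ r) → |A.mulVec w a| ≤ (∑ k, |A a k|) * r := by
    intro A w a r hw
    calc |A.mulVec w a| = |∑ k, A a k * w k| := rfl
      _ ≤ ∑ k, |A a k * w k| := Finset.abs_sum_le_sum_abs _ _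
      _ ≤ ∑ k, |A a k| * r := by
          refine Finset.sum_le_sum fun k _ => ?_
          rw [abs_mul]
          exact mul_le_mul_of_nonneg_left (hw k) (abs_nonneg _)
      _ = (∑ k, |A a k|) * r := by rw [Finset.sum_mul]
  -- box bound
  have hbox : ∀ n, (∀ b, ip b < n) → (∀ b, im b < n) →
      ∀ A : Matrix (Fin d) (Fin d) ℝ,
      (∀ i < n, ∀ j, A.mulVec (x i) j ≤ relu (Astar.mulVec (x i)) j) →
      ∀ a b, |A a b| ≤ R₀ := by
    intro n hpn hmn A hA a b
    have key : ∀ b, |A a b| ≤ 2*C + δ * ∑ k, |A a k| := by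
      intro b
      have hx2 : ∀ (c : Fin d → ℝ) (i : ℕ), dist (x i) c < δ → (∀ k, |c k| ≤ 1) →
          ∀ k, |x i k| ≤ 2 := by
        intro c i hi hc k
        have h1 : |x i k - c k| ≤ dist (x i) c := by
          rw [← Real.dist_eq]; exact dist_le_pi_dist (x i) c k
        have := hc k
        have h2 : dist (x i) c ≤ δ := hi.le
        calc |x i k| = |(x i k - c k) + c k| := by ring_nf
          _ ≤ |x i k - c k| + |c k| := abs_add_le _ _
          _ ≤ δ + 1 := by linarith
          _ ≤ 2 := by linarith
      have hsingle : ∀ k, |(Pi.single b 1 : Fin d → ℝ) k| ≤ 1 := by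
        intro k
        rcases eq_or_ne k b with rfl | hk
        · simp
        · simp [Pi.single_apply, hk]
      have hsingle' : ∀ k, |(-(Pi.single b 1 : Fin d → ℝ)) k| ≤ 1 := by
        intro k; rw [Pi.neg_apply, abs_neg]; exact hsingle k
      -- positive direction
      have hup : A a b ≤ 2*C + δ * ∑ k, |A a k| := by
        have hcons := hA (ip b) (hpn b) a
        have hxb := hip b
        have h2C := hrelu (x (ip b)) (hx2 _ _ hxb hsingle) a
        have hdec : A a b = A.mulVec (x (ip b)) a + A.mulVec (Pi.single b 1 - x (ip b)) a := by
          rw [Matrix.mulVec_sub]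
          simp [Matrix.mulVec_single]
        have hsmall : |A.mulVec (Pi.single b 1 - x (ip b)) a| ≤ (∑ k, |A a k|) * δ := by
          refine hmv A _ a δ fun k => ?_
          have : |x (ip b) k - (Pi.single b 1 : Fin d → ℝ) k| ≤ dist (x (ip b)) (Pi.single b 1) := by
            rw [← Real.dist_eq]; exact dist_le_pi_dist _ _ k
          rw [Pi.sub_apply, abs_sub_comm]
          linarith [hxb]
        have := abs_le.1 hsmall
        rw [hdec]
        nlinarith [this.2]
      have hdn : -A a b ≤ 2*C + δ * ∑ k, |A a k| := by
        have hcons := hA (im b) (hmn b) a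
        have hxb := him b
        have h2C := hrelu (x (im b)) (hx2 _ _ hxb hsingle') a
        have hdec : -A a b = A.mulVec (x (im b)) a + A.mulVec (-Pi.single b 1 - x (im b)) a := by
          rw [Matrix.mulVec_sub, Matrix.mulVec_neg]
          simp [Matrix.mulVec_single]
        have hsmall : |A.mulVec (-Pi.single b 1 - x (im b)) a| ≤ (∑ k, |A a k|) * δ := by
          refine hmv A _ a δ fun k => ?_
          have : |x (im b) k - (-(Pi.single b 1 : Fin d → ℝ)) k| ≤ dist (x (im b)) (-Pi.single b 1) := by
            rw [← Real.dist_eq]; exact dist_le_pi_dist _ _ k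
          rw [Pi.sub_apply, abs_sub_comm]
          linarith [hxb]
        have := abs_le.1 hsmall
        rw [hdec]
        nlinarith [this.2]
      rw [abs_le]
      constructor <;> linarith
    have hSnn : (0:ℝ) ≤ ∑ k, |A a k| := Finset.sum_nonneg fun _ _ => abs_nonneg _
    have hS : ∑ k, |A a k| ≤ 4*C*d := by
      have h1 : ∑ k, |A a k| ≤ ∑ _k : Fin d, (2*C + δ * ∑ k, |A a k|) :=
        Finset.sum_le_sum fun k _ => key k
      rw [Finset.sum_const, Finset.card_univ, Fintype.card_fin, nsmul_eq_mul] at h1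
      have h2 : (d:ℝ) * (2*C + δ * ∑ k, |A a k|)
          = 2*C*d + (1/2) * ∑ k, |A a k| := by
        have : (d:ℝ) * (δ * ∑ k, |A a k|) = ((d:ℝ)*δ) * ∑ k, |A a k| := by ring
        rw [mul_add, this, hδd]; ring
      rw [h2] at h1
      nlinarith [h1, hC, hdpos]
    calc |A a b| ≤ ∑ k, |A a k| :=
          Finset.single_le_sum (f := fun k => |A a k|) (fun _ _ => abs_nonneg _)
            (Finset.mem_univ b)
      _ ≤ R₀ := hS
  -- compact bad set
  set Kc : Set (Matrix (Fin d) (Fin d) ℝ) :=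
    (Set.univ.pi fun _a : Fin d => Set.univ.pi fun _b : Fin d => Set.Icc (-R₀) R₀) ∩
      {A | ε ≤ Metric.infDist A (TS Astar)} with hKcdef
  have hKcomp : IsCompact Kc := by
    refine IsCompact.inter_right ?_ ?_
    · exact isCompact_univ_pi fun _ => isCompact_univ_pi fun _ => isCompact_Icc
    · exact isClosed_le continuous_const (Metric.continuous_infDist_pt _)
  -- covering
  have hcov : ∀ A : Matrix (Fin d) (Fin d) ℝ, A ∈ Kc →
      ∃ (U : Set (Matrix (Fin d) (Fin d) ℝ)) (V : Set (Fin d → ℝ)) (j : Fin d),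
        IsOpen U ∧ A ∈ U ∧ IsOpen V ∧ V.Nonempty ∧
        ∀ A' ∈ U, ∀ v ∈ V, relu (Astar.mulVec v) j < A'.mulVec v j := by
    intro A hAK
    have hnotin : A ∉ TS Astar := by
      intro hmem
      have := Metric.infDist_zero_of_mem hmem
      have := hAK.2
      simp only [Set.mem_setOf_eq] at this
      rw [Metric.infDist_zero_of_mem hmem] at this
      linarith
    have : ¬ ∀ x j, A.mulVec x j ≤ relu (Astar.mulVec x) j :=
      fun h => hnotin (mem_TS hAinv h)
    push_neg at this
    obtain ⟨x₀, j, hx₀⟩ := this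
    have hWopen : IsOpen {p : Matrix (Fin d) (Fin d) ℝ × (Fin d → ℝ) |
        relu (Astar.mulVec p.2) j < p.1.mulVec p.2 j} := by
      apply isOpen_lt
      · simp only [relu, Matrix.mulVec, dotProduct]
        exact (continuous_finset_sum _ fun k _ =>
          continuous_const.mul ((continuous_apply k).comp continuous_snd)).max continuous_const
      · simp only [Matrix.mulVec, dotProduct]
        exact continuous_finset_sum _ fun k _ =>
          (((continuous_apply k).comp ((continuous_apply j).comp continuous_fst))).mul
            ((continuous_apply k).comp continuous_snd)
    obtain ⟨U, V, hU, hV, hAU, hxV, hUV⟩ := isOpen_prod_iff.1 hWopen A x₀ hx₀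
    exact ⟨U, V, j, hU, hAU, hV, ⟨x₀, hxV⟩, fun A' hA' v hv => hUV (Set.mk_mem_prod hA' hv)⟩
  choose U V jj hUopen hmemU hVopen hVne hPP using hcov
  obtain ⟨t, ht⟩ := hKcomp.elim_finite_subcover (fun z : {A // A ∈ Kc} => U z z.2)
    (fun z => hUopen z z.2) (fun A hA => Set.mem_iUnion.2 ⟨⟨A, hA⟩, hmemU A hA⟩)
  have hsample : ∀ z : {A // A ∈ Kc}, ∃ i, x i ∈ V z z.2 := by
    intro z
    obtain ⟨v, ⟨i, rfl⟩, hv⟩ := hdense.exists_mem_open (hVopen z z.2) (hVne z z.2)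
    exact ⟨i, hv⟩
  choose nidx hnidx using hsample
  set N : ℕ := (Finset.univ.sup fun b : Fin d => max (ip b) (im b)) ⊔ t.sup nidx with hN
  refine eventually_atTop.2 ⟨N + 1, fun n hn => ?_⟩
  have hipn : ∀ b, ip b < n := by
    intro b
    have h1 : ip b ≤ max (ip b) (im b) := le_max_left _ _
    have h2 : max (ip b) (im b) ≤ Finset.univ.sup fun b : Fin d => max (ip b) (im b) :=
      Finset.le_sup (f := fun b : Fin d => max (ip b) (im b)) (Finset.mem_univ b)
    have : ip b ≤ N := le_trans (le_trans h1 h2) (le_max_left _ _)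
    omega
  have himn : ∀ b, im b < n := by
    intro b
    have h1 : im b ≤ max (ip b) (im b) := le_max_right _ _
    have h2 : max (ip b) (im b) ≤ Finset.univ.sup fun b : Fin d => max (ip b) (im b) :=
      Finset.le_sup (f := fun b : Fin d => max (ip b) (im b)) (Finset.mem_univ b)
    have : im b ≤ N := le_trans (le_trans h1 h2) (le_max_left _ _)
    omega
  apply Metric.hausdorffDist_le_of_mem_dist hε.le
  · intro A hA
    simp only [Set.mem_setOf_eq] at hA
    have hAbox := hbox n hipn himn A hA
    have hinf : Metric.infDist A (TS Astar) < ε := by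
      by_contra hcon
      push_neg at hcon
      have hAK : A ∈ Kc := by
        refine ⟨?_, hcon⟩
        intro a _
        intro b _
        exact abs_le.1 (hAbox a b)
      obtain ⟨z, hzt, hzU⟩ := Set.mem_iUnion₂.1 (ht hAK)
      have hlt : nidx z < n := by
        have : nidx z ≤ N := le_trans (Finset.le_sup hzt) (le_max_right _ _)
        omega
      have h1 := hA (nidx z) hlt (jj z z.2)
      have h2 := hPP z z.2 A hzU (x (nidx z)) (hnidx z)
      linarith
    obtain ⟨y, hy, hdy⟩ := (TS_compact Astar).exists_infDist_eq_dist (TS_nonempty Astar) A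
    exact ⟨y, hy, by rw [← hdy]; linarith⟩
  · intro y hy
    refine ⟨y, fun i _ j => TS_sub hy _ _, by simp [hε.le]⟩

lemma ae_dense {d : ℕ} (μ : Measure (Fin d → ℝ)) [IsProbabilityMeasure μ]
    (hsupp : ∀ U : Set (Fin d → ℝ), IsOpen U → U.Nonempty → 0 < μ U)
    {Ω : Type} [MeasurableSpace Ω] (P : Measure Ω) [IsProbabilityMeasure P]
    (X : ℕ → Ω → (Fin d → ℝ)) (hmeas : ∀ n, Measurable (X n))
    (hindep : iIndepFun X P)
    (hdist : ∀ n, P.map (X n) = μ) :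
    ∀ᵐ ω ∂P, Dense (Set.range fun i => X i ω) := by
  obtain ⟨b, hbc, hbne, hbasis⟩ := TopologicalSpace.exists_countable_basis (Fin d → ℝ)
  have key : ∀ U ∈ b, ∀ᵐ ω ∂P, ∃ i, X i ω ∈ U := by
    intro U hU
    have hUopen : IsOpen U := hbasis.isOpen hU
    have hUne : U.Nonempty := Set.nonempty_iff_ne_empty.2 (fun h => hbne (h ▸ hU))
    set p : ENNReal := μ Uᶜ with hp
    have hplt : p < 1 := by
      rw [hp, prob_compl_eq_one_sub hUopen.measurableSet]
      exact ENNReal.sub_lt_self ENNReal.one_ne_top one_ne_zero (hsupp U hUopen hUne).ne'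
    have hfac : ∀ i, P (X i ⁻¹' Uᶜ) = p := by
      intro i
      rw [hp, ← hdist i, Measure.map_apply (hmeas i) hUopen.measurableSet.compl]
    have hbound : ∀ n : ℕ, P (⋂ i, X i ⁻¹' Uᶜ) ≤ p ^ n := by
      intro n
      have hsub : (⋂ i, X i ⁻¹' Uᶜ) ⊆ ⋂ i ∈ Finset.range n, X i ⁻¹' Uᶜ := by
        intro ω hω
        simp only [Set.mem_iInter] at hω ⊢
        exact fun i _ => hω i
      calc P (⋂ i, X i ⁻¹' Uᶜ) ≤ P (⋂ i ∈ Finset.range n, X i ⁻¹' Uᶜ) := measure_mono hsub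
        _ = ∏ i ∈ Finset.range n, P (X i ⁻¹' Uᶜ) := by
            refine hindep.meas_biInter fun i _ => ?_
            exact ⟨Uᶜ, hUopen.measurableSet.compl, rfl⟩
        _ = p ^ n := by
            rw [Finset.prod_congr rfl (fun i _ => hfac i), Finset.prod_const, Finset.card_range]
    have hzero : P (⋂ i, X i ⁻¹' Uᶜ) = 0 := by
      have htend := ENNReal.tendsto_pow_atTop_nhds_zero_of_lt_one hplt
      have := ge_of_tendsto' htend hbound
      exact le_antisymm this (zero_le)
    rw [ae_iff]
    convert hzero using 2
    ext ω
    simp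
  have := (ae_ball_iff hbc).2 key
  filter_upwards [this] with ω hω
  rw [hbasis.dense_iff]
  intro o ho hone
  obtain ⟨i, hi⟩ := hω o ho
  exact ⟨X i ω, hi, Set.mem_range_self i⟩

theorem stmt17 (d : ℕ) (hd : 1 ≤ d)
    (Astar : Matrix (Fin d) (Fin d) ℝ)
    (hAnn : ∀ i j, 0 ≤ Astar i j) (hAinv : IsUnit Astar.det)
    (μ : Measure (Fin d → ℝ)) [IsProbabilityMeasure μ]
    (hsupp : ∀ U : Set (Fin d → ℝ), IsOpen U → U.Nonempty → 0 < μ U)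
    (Ω : Type) [MeasurableSpace Ω] (P : Measure Ω) [IsProbabilityMeasure P]
    (X : ℕ → Ω → (Fin d → ℝ)) (hmeas : ∀ n, Measurable (X n))
    (hindep : iIndepFun X P)
    (hdist : ∀ n, P.map (X n) = μ) :
    let That : ℕ → Ω → Set (Matrix (Fin d) (Fin d) ℝ) := fun n ω =>
      {A | ∀ i < n, ∀ j, A.mulVec (X i ω) j ≤ relu (Astar.mulVec (X i ω)) j}
    let Tstar : Set (Matrix (Fin d) (Fin d) ℝ) :=
      {A | ∃ k : Fin d → ℝ, (∀ j, 0 ≤ k j ∧ k j ≤ 1) ∧ A = Matrix.diagonal k * Astar}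
    ∀ᵐ ω ∂P,
      Tendsto (fun n => Metric.hausdorffDist (That n ω) Tstar) atTop (nhds 0) := by
  intro That Tstar
  filter_upwards [ae_dense μ hsupp P X hmeas hindep hdist] with ω hω
  rw [Metric.tendsto_atTop]
  intro ε hε
  have h2 : (0:ℝ) < ε/2 := by linarith
  obtain ⟨N, hN⟩ := eventually_atTop.1
    (Tn_eventually hd Astar hAinv (fun i => X i ω) hω h2)
  refine ⟨N, fun n hn => ?_⟩
  have hb := hN n hn
  rw [Real.dist_eq, sub_zero, abs_of_nonneg Metric.hausdorffDist_nonneg]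
  calc Metric.hausdorffDist (That n ω) Tstar ≤ ε/2 := hb
    _ < ε := by linarith
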